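/- arXiv:1011.4488 — 2 statements merged into one kernel-verified Lean document; each statement's English description precedes it below -/
import Mathlib

section
/- Suppose u : [-r, T] → H is a solution satisfying the uniform Hölder bound ‖u(t₁) − u(t₂)‖ ≤ L₀|t₁ − t₂|^{1/2} for all t₁, t₂, suppose B : H → H is Lipschitz with constant L_B, and suppose η satisfies the Lipschitz bound |η(u_{t₁}) − η(u_{t₂})| ≤ L_η ‖u_{t₁} − u_{t₂}‖_C along the trajectory. Then f(t) := B(u(t − η(u_t))) satisfies, for |t₁ − t₂| ≤ 1, the Hölder estimate ‖f(t₁) − f(t₂)‖ ≤ L_B L₀ (1 + (L_η L₀)^{1/2}) |t₁ − t₂|^{1/4}. -/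
/-- The history segment `u_t ∈ C([-r,0];H)`, `u_t(θ) = u(t+θ)`. -/
noncomputable def seg {H : Type*} [NormedAddCommGroup H] (r : ℝ) (u : ℝ → H)
    (hu : Continuous u) (t : ℝ) : C(Set.Icc (-r) (0:ℝ), H) :=
  ⟨fun θ => u (t + θ.1), hu.comp (by fun_prop)⟩

lemma rpow_half_add_le {a b : ℝ} (ha : 0 ≤ a) (hb : 0 ≤ b) :
    (a + b) ^ ((1:ℝ)/2) ≤ a ^ ((1:ℝ)/2) + b ^ ((1:ℝ)/2) := by
  rw [← Real.sqrt_eq_rpow, ← Real.sqrt_eq_rpow, ← Real.sqrt_eq_rpow]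
  rw [show (Real.sqrt a + Real.sqrt b) = Real.sqrt ((Real.sqrt a + Real.sqrt b)^2) by
    rw [Real.sqrt_sq (by positivity)]]
  apply Real.sqrt_le_sqrt
  nlinarith [Real.sq_sqrt ha, Real.sq_sqrt hb, Real.sqrt_nonneg a, Real.sqrt_nonneg b]

/-- Hölder estimate (17) in the Lemma of the paper: along a `1/2`-Hölder trajectory,
`f(t) = B(u(t - η(u_t)))` is `1/4`-Hölder with the stated constant. -/
theorem stmt_11 {H : Type*} [NormedAddCommGroup H] [InnerProductSpace ℝ H]
    (r T L₀ L_B L_η : ℝ) (hr : 0 < r) (hT : 0 < T)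
    (hL₀ : 0 ≤ L₀) (hLB : 0 ≤ L_B) (hLη : 0 ≤ L_η)
    (u : ℝ → H) (hu : Continuous u)
    (hHolder : ∀ t₁ ∈ Set.Icc (-r) T, ∀ t₂ ∈ Set.Icc (-r) T,
      ‖u t₁ - u t₂‖ ≤ L₀ * |t₁ - t₂| ^ ((1:ℝ)/2))
    (B : H → H) (hB : ∀ v w : H, ‖B v - B w‖ ≤ L_B * ‖v - w‖)
    (η : C(Set.Icc (-r) (0:ℝ), H) → ℝ) (hηr : ∀ φ, η φ ∈ Set.Icc (0:ℝ) r)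
    (hηLip : ∀ t₁ ∈ Set.Icc (0:ℝ) T, ∀ t₂ ∈ Set.Icc (0:ℝ) T,
      |η (seg r u hu t₁) - η (seg r u hu t₂)| ≤ L_η * ‖seg r u hu t₁ - seg r u hu t₂‖) :
    ∀ t₁ ∈ Set.Icc (0:ℝ) T, ∀ t₂ ∈ Set.Icc (0:ℝ) T, |t₁ - t₂| ≤ 1 →
      ‖B (u (t₁ - η (seg r u hu t₁))) - B (u (t₂ - η (seg r u hu t₂)))‖
        ≤ L_B * L₀ * (1 + (L_η * L₀) ^ ((1:ℝ)/2)) * |t₁ - t₂| ^ ((1:ℝ)/4) := by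
  intro t₁ ht₁ t₂ ht₂ hle
  obtain ⟨ht₁0, ht₁T⟩ := ht₁
  obtain ⟨ht₂0, ht₂T⟩ := ht₂
  set d := |t₁ - t₂| with hd
  have hd0 : 0 ≤ d := abs_nonneg _
  rcases eq_or_lt_of_le hd0 with h0 | h0
  · -- t₁ = t₂
    have : t₁ = t₂ := by rw [← sub_eq_zero]; exact abs_eq_zero.mp h0.symm
    subst this
    simp
    positivity
  · have η₁ := hηr (seg r u hu t₁)
    have η₂ := hηr (seg r u hu t₂)
    set s₁ := t₁ - η (seg r u hu t₁) with hs₁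
    set s₂ := t₂ - η (seg r u hu t₂) with hs₂
    have hs₁m : s₁ ∈ Set.Icc (-r) T :=
      ⟨by simp only [hs₁]; linarith [η₁.1, η₁.2], by simp only [hs₁]; linarith [η₁.1]⟩
    have hs₂m : s₂ ∈ Set.Icc (-r) T :=
      ⟨by simp only [hs₂]; linarith [η₂.1, η₂.2], by simp only [hs₂]; linarith [η₂.1]⟩
    -- segment bound
    have hseg : ‖seg r u hu t₁ - seg r u hu t₂‖ ≤ L₀ * d ^ ((1:ℝ)/2) := by
      apply ContinuousMap.norm_le _ (by positivity) |>.mpr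
      intro θ
      have hθ := θ.2
      simp only [ContinuousMap.sub_apply, seg, ContinuousMap.coe_mk]
      have h1 : t₁ + θ.1 ∈ Set.Icc (-r) T := ⟨by linarith [hθ.1], by linarith [hθ.2]⟩
      have h2 : t₂ + θ.1 ∈ Set.Icc (-r) T := ⟨by linarith [hθ.1], by linarith [hθ.2]⟩
      calc ‖u (t₁ + θ.1) - u (t₂ + θ.1)‖ ≤ L₀ * |t₁ + θ.1 - (t₂ + θ.1)| ^ ((1:ℝ)/2) :=
            hHolder _ h1 _ h2
        _ = L₀ * d ^ ((1:ℝ)/2) := by ring_nf; rw [hd]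
    have hηd : |η (seg r u hu t₁) - η (seg r u hu t₂)| ≤ L_η * (L₀ * d ^ ((1:ℝ)/2)) := by
      calc |η (seg r u hu t₁) - η (seg r u hu t₂)|
          ≤ L_η * ‖seg r u hu t₁ - seg r u hu t₂‖ := hηLip t₁ ⟨ht₁0, ht₁T⟩ t₂ ⟨ht₂0, ht₂T⟩
        _ ≤ L_η * (L₀ * d ^ ((1:ℝ)/2)) := by
            exact mul_le_mul_of_nonneg_left hseg hLη
    have hsd : |s₁ - s₂| ≤ d + L_η * L₀ * d ^ ((1:ℝ)/2) := by
      have : s₁ - s₂ = (t₁ - t₂) - (η (seg r u hu t₁) - η (seg r u hu t₂)) := by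
        simp only [hs₁, hs₂]; ring
      rw [this]
      calc |(t₁ - t₂) - (η (seg r u hu t₁) - η (seg r u hu t₂))|
          ≤ |t₁ - t₂| + |η (seg r u hu t₁) - η (seg r u hu t₂)| := abs_sub _ _
        _ ≤ d + L_η * L₀ * d ^ ((1:ℝ)/2) := by rw [← hd]; nlinarith [hηd]
    -- key power estimate
    have hpow : |s₁ - s₂| ^ ((1:ℝ)/2) ≤ (1 + (L_η * L₀) ^ ((1:ℝ)/2)) * d ^ ((1:ℝ)/4) := by
      have h1 : |s₁ - s₂| ^ ((1:ℝ)/2) ≤ (d + L_η * L₀ * d ^ ((1:ℝ)/2)) ^ ((1:ℝ)/2) :=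
        Real.rpow_le_rpow (abs_nonneg _) hsd (by norm_num)
      have h2 : (d + L_η * L₀ * d ^ ((1:ℝ)/2)) ^ ((1:ℝ)/2)
          ≤ d ^ ((1:ℝ)/2) + (L_η * L₀ * d ^ ((1:ℝ)/2)) ^ ((1:ℝ)/2) :=
        rpow_half_add_le hd0 (by positivity)
      have h3 : (L_η * L₀ * d ^ ((1:ℝ)/2)) ^ ((1:ℝ)/2)
          = (L_η * L₀) ^ ((1:ℝ)/2) * d ^ ((1:ℝ)/4) := by
        rw [Real.mul_rpow (by positivity) (by positivity), ← Real.rpow_mul hd0]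
        norm_num
      have h4 : d ^ ((1:ℝ)/2) ≤ d ^ ((1:ℝ)/4) :=
        Real.rpow_le_rpow_of_exponent_ge h0 hle (by norm_num)
      calc |s₁ - s₂| ^ ((1:ℝ)/2) ≤ d ^ ((1:ℝ)/2) + (L_η * L₀) ^ ((1:ℝ)/2) * d ^ ((1:ℝ)/4) := by
            rw [← h3]; linarith
        _ ≤ (1 + (L_η * L₀) ^ ((1:ℝ)/2)) * d ^ ((1:ℝ)/4) := by nlinarith
    calc ‖B (u s₁) - B (u s₂)‖ ≤ L_B * ‖u s₁ - u s₂‖ := hB _ _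
      _ ≤ L_B * (L₀ * |s₁ - s₂| ^ ((1:ℝ)/2)) :=
          mul_le_mul_of_nonneg_left (hHolder _ hs₁m _ hs₂m) hLB
      _ ≤ L_B * (L₀ * ((1 + (L_η * L₀) ^ ((1:ℝ)/2)) * d ^ ((1:ℝ)/4))) := by
          apply mul_le_mul_of_nonneg_left _ hLB
          exact mul_le_mul_of_nonneg_left hpow hL₀
      _ = L_B * L₀ * (1 + (L_η * L₀) ^ ((1:ℝ)/2)) * d ^ ((1:ℝ)/4) := by ring
end

section
/- Let φ ∈ C([-r,0]; H) be L-Lipschitz (‖φ(θ₁) − φ(θ₂)‖ ≤ L|θ₁ − θ₂|), let η : C → [0,r] be Lipschitz with constant L_η on a set containing the histories involved, and suppose for all τ ∈ [0, t₁] both τ − η(u_τ) ≤ 0 and τ − η(u^k_τ) ≤ 0, with u(s) = φ(s) and u^k restricted so that u(τ − η(u^k_τ)) = φ(τ − η(u^k_τ)). Then J^k_2(t₁) := ∫₀^{t₁} ‖B(u(τ − η(u^k_τ))) − B(u(τ − η(u_τ)))‖ dτ ≤ L_B L L_η t₁ max_{s∈[-r,t₁]} ‖u^k(s) − u(s)‖.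 -/
/-- The central new estimate in the proof of Theorem 2 of the paper: if on `[0,t₁]`
the delayed arguments stay in the Lipschitz initial segment `φ`, then
`J₂ᵏ(t₁) ≤ L_B L L_η t₁ max_{s∈[-r,t₁]} ‖uᵏ(s) − u(s)‖`. -/
theorem stmt_18 {H : Type*} [NormedAddCommGroup H] [InnerProductSpace ℝ H]
    [CompleteSpace H]
    (r t₁ L L_B L_η : ℝ) (hr : 0 < r) (ht₁ : 0 < t₁)
    (hL : 0 ≤ L) (hLB : 0 ≤ L_B) (hLη : 0 ≤ L_η)
    (φ : C(Set.Icc (-r) (0:ℝ), H))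
    (hφLip : ∀ θ₁ θ₂ : Set.Icc (-r) (0:ℝ), ‖φ θ₁ - φ θ₂‖ ≤ L * |θ₁.1 - θ₂.1|)
    (u uk : ℝ → H) (hu : Continuous u) (huk : Continuous uk)
    (hu0 : ∀ θ : Set.Icc (-r) (0:ℝ), u θ.1 = φ θ)
    (B : H → H) (hB : ∀ v w : H, ‖B v - B w‖ ≤ L_B * ‖v - w‖)
    (η : C(Set.Icc (-r) (0:ℝ), H) → ℝ) (hηr : ∀ ψ, η ψ ∈ Set.Icc (0:ℝ) r)
    (hdel : ∀ τ ∈ Set.Icc (0:ℝ) t₁,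
      τ - η (seg r u hu τ) ≤ 0 ∧ τ - η (seg r uk huk τ) ≤ 0)
    (hηLip : ∀ τ ∈ Set.Icc (0:ℝ) t₁,
      |η (seg r uk huk τ) - η (seg r u hu τ)| ≤ L_η * ‖seg r uk huk τ - seg r u hu τ‖) :
    (∫ τ in (0:ℝ)..t₁, ‖B (u (τ - η (seg r uk huk τ))) - B (u (τ - η (seg r u hu τ)))‖)
      ≤ L_B * L * L_η * t₁ * ⨆ s : Set.Icc (-r) t₁, ‖uk s.1 - u s.1‖ := by

  set M := ⨆ s : Set.Icc (-r) t₁, ‖uk s.1 - u s.1‖ with hM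
  have hrt : (-r : ℝ) ≤ t₁ := le_trans (by linarith) ht₁.le
  have hbdd : BddAbove (Set.range fun s : Set.Icc (-r) t₁ => ‖uk s.1 - u s.1‖) := by
    have hc : ContinuousOn (fun s : ℝ => ‖uk s - u s‖) (Set.Icc (-r) t₁) :=
      ((huk.sub hu).norm).continuousOn
    obtain ⟨C, hC⟩ := (isCompact_Icc.bddAbove_image hc)
    refine ⟨C, ?_⟩
    rintro x ⟨s, rfl⟩
    exact hC ⟨s.1, s.2, rfl⟩
  have hM0 : 0 ≤ M := by
    have := le_ciSup hbdd (⟨0, by constructor <;> linarith⟩ : Set.Icc (-r) t₁)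
    exact le_trans (norm_nonneg _) this
  set C := L_B * L * (L_η * M) with hC
  have hC0 : 0 ≤ C := by positivity
  have key : ∀ τ ∈ Set.uIoc (0:ℝ) t₁,
      ‖‖B (u (τ - η (seg r uk huk τ))) - B (u (τ - η (seg r u hu τ)))‖‖ ≤ C := by
    intro τ hτ
    rw [Set.uIoc_of_le ht₁.le] at hτ
    have hτ' : τ ∈ Set.Icc (0:ℝ) t₁ := ⟨hτ.1.le, hτ.2⟩
    have h1 := (hηr (seg r u hu τ))
    have h2 := (hηr (seg r uk huk τ))
    have hdel' := hdel τ hτ'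
    have ha : τ - η (seg r uk huk τ) ∈ Set.Icc (-r) (0:ℝ) :=
      ⟨by have := h2.2; linarith [hτ'.1], hdel'.2⟩
    have hb : τ - η (seg r u hu τ) ∈ Set.Icc (-r) (0:ℝ) :=
      ⟨by have := h1.2; linarith [hτ'.1], hdel'.1⟩
    have hseg : ‖seg r uk huk τ - seg r u hu τ‖ ≤ M := by
      rw [ContinuousMap.norm_le _ hM0]
      intro θ
      have hs : τ + θ.1 ∈ Set.Icc (-r) t₁ := by
        constructor
        · have := θ.2.1; linarith [hτ'.1]
        · have := θ.2.2; linarith [hτ'.2]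
      have := le_ciSup hbdd (⟨τ + θ.1, hs⟩ : Set.Icc (-r) t₁)
      simpa [seg, ContinuousMap.sub_apply] using this
    calc ‖‖B (u (τ - η (seg r uk huk τ))) - B (u (τ - η (seg r u hu τ)))‖‖
        = ‖B (u (τ - η (seg r uk huk τ))) - B (u (τ - η (seg r u hu τ)))‖ := by
          rw [Real.norm_eq_abs, abs_of_nonneg (norm_nonneg _)]
      _ ≤ L_B * ‖u (τ - η (seg r uk huk τ)) - u (τ - η (seg r u hu τ))‖ := hB _ _
      _ = L_B * ‖φ ⟨_, ha⟩ - φ ⟨_, hb⟩‖ := by rw [hu0 ⟨_, ha⟩, hu0 ⟨_, hb⟩]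
      _ ≤ L_B * (L * |(τ - η (seg r uk huk τ)) - (τ - η (seg r u hu τ))|) :=
          mul_le_mul_of_nonneg_left (hφLip _ _) hLB
      _ = L_B * (L * |η (seg r uk huk τ) - η (seg r u hu τ)|) := by
          rw [show (τ - η (seg r uk huk τ)) - (τ - η (seg r u hu τ)) =
            -(η (seg r uk huk τ) - η (seg r u hu τ)) by ring, abs_neg]
      _ ≤ L_B * (L * (L_η * ‖seg r uk huk τ - seg r u hu τ‖)) := by
          have := hηLip τ hτ'
          gcongr
      _ ≤ L_B * (L * (L_η * M)) := by gcongr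
      _ = C := by rw [hC]; ring
  have hnorm := intervalIntegral.norm_integral_le_of_norm_le_const key
  have : (∫ τ in (0:ℝ)..t₁, ‖B (u (τ - η (seg r uk huk τ))) - B (u (τ - η (seg r u hu τ)))‖)
      ≤ ‖∫ τ in (0:ℝ)..t₁, ‖B (u (τ - η (seg r uk huk τ))) - B (u (τ - η (seg r u hu τ)))‖‖ :=
    le_abs_self _
  calc (∫ τ in (0:ℝ)..t₁, ‖B (u (τ - η (seg r uk huk τ))) - B (u (τ - η (seg r u hu τ)))‖)
      ≤ C * |t₁ - 0| := le_trans this hnorm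
    _ = L_B * L * L_η * t₁ * M := by rw [abs_of_pos (by simpa using ht₁), hC]; ring
end
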